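/- For an automaton A and the target automaton A_t, the languages L_{A_t} and L_A (maps TI → O) are equal if and only if for every recursive F_I-coalgebra ρ : S → F_I S the ρ-restricted languages agree: o_t ∘ [i_t, δ_t]^ρ = o ∘ [i, δ]^ρ. -/

import Mathlib

open CategoryTheory Limits

/-- The functor `F_I = I + F(-)`. -/
noncomputable def FIfun {C : Type*} [Category C] [HasBinaryCoproducts C]
    (F : C ⥤ C) (I : C) : C ⥤ C where
  obj X := I ⨿ F.obj X
  map f := coprod.map (𝟙 I) (F.map f)

/-- Language equivalence via recursion: the languages of the target automaton and of another
automaton agree (i.e. `reach_t ≫ o_t = reach ≫ o` out of the initial `F_I`-algebra `TI`)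
iff for every recursive `F_I`-coalgebra `ρ` the `ρ`-restricted languages agree. -/
theorem stmt5 {C : Type*} [Category C] [HasBinaryCoproducts C]
    (F : C ⥤ C) (I : C)
    (TI : C) (a : (FIfun F I).obj TI ⟶ TI)
    (hinit : ∀ (X : C) (x : (FIfun F I).obj X ⟶ X),
      ∃! h : TI ⟶ X, a ≫ h = (FIfun F I).map h ≫ x)
    (inv : TI ⟶ (FIfun F I).obj TI)
    (hinv1 : a ≫ inv = 𝟙 _) (hinv2 : inv ≫ a = 𝟙 _)
    (Qt Q O : C) (δt : F.obj Qt ⟶ Qt) (it : I ⟶ Qt) (ot : Qt ⟶ O)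
    (δ : F.obj Q ⟶ Q) (i : I ⟶ Q) (o : Q ⟶ O)
    (reacht : TI ⟶ Qt)
    (hreacht : a ≫ reacht = (FIfun F I).map reacht ≫ coprod.desc it δt)
    (reach : TI ⟶ Q)
    (hreach : a ≫ reach = (FIfun F I).map reach ≫ coprod.desc i δ) :
    reacht ≫ ot = reach ≫ o ↔
      ∀ (S : C) (ρ : S ⟶ (FIfun F I).obj S),
        (∀ (X : C) (x : (FIfun F I).obj X ⟶ X),
          ∃! f : S ⟶ X, f = ρ ≫ (FIfun F I).map f ≫ x) →
        ∀ (f : S ⟶ Qt) (g : S ⟶ Q),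
          f = ρ ≫ (FIfun F I).map f ≫ coprod.desc it δt →
          g = ρ ≫ (FIfun F I).map g ≫ coprod.desc i δ →
          f ≫ ot = g ≫ o := by
  constructor
  · intro heq S ρ hrec f g hf hg
    obtain ⟨h, hh, huniq⟩ := hrec TI a
    have hft : f = h ≫ reacht := by
      obtain ⟨f', hf', hfu⟩ := hrec Qt (coprod.desc it δt)
      have h1 : f = f' := hfu f hf
      have h2 : h ≫ reacht = f' := by
        apply hfu
        calc h ≫ reacht = (ρ ≫ (FIfun F I).map h ≫ a) ≫ reacht := by rw [← hh]
          _ = ρ ≫ (FIfun F I).map h ≫ (FIfun F I).map reacht ≫ coprod.desc it δt := by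
              simp [hreacht]
          _ = ρ ≫ (FIfun F I).map (h ≫ reacht) ≫ coprod.desc it δt := by
              rw [Functor.map_comp]; exact congrArg (ρ ≫ ·) (Category.assoc _ _ _).symm
      rw [h1, h2]
    have hgt : g = h ≫ reach := by
      obtain ⟨g', hg', hgu⟩ := hrec Q (coprod.desc i δ)
      have h1 : g = g' := hgu g hg
      have h2 : h ≫ reach = g' := by
        apply hgu
        calc h ≫ reach = (ρ ≫ (FIfun F I).map h ≫ a) ≫ reach := by rw [← hh]
          _ = ρ ≫ (FIfun F I).map h ≫ (FIfun F I).map reach ≫ coprod.desc i δ := by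
              simp [hreach]
          _ = ρ ≫ (FIfun F I).map (h ≫ reach) ≫ coprod.desc i δ := by
              rw [Functor.map_comp]; exact congrArg (ρ ≫ ·) (Category.assoc _ _ _).symm
      rw [h1, h2]
    rw [hft, hgt, Category.assoc, Category.assoc, heq]
  · intro hall
    -- inv is a recursive coalgebra
    have hrec : ∀ (X : C) (x : (FIfun F I).obj X ⟶ X),
        ∃! f : TI ⟶ X, f = inv ≫ (FIfun F I).map f ≫ x := by
      intro X x
      obtain ⟨h, hh, huniq⟩ := hinit X x
      refine ⟨h, ?_, ?_⟩
      · show h = inv ≫ (FIfun F I).map h ≫ x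
        rw [← hh, ← Category.assoc, hinv2, Category.id_comp]
      · intro k hk
        apply huniq
        show a ≫ k = (FIfun F I).map k ≫ x
        conv_lhs => rw [hk]
        rw [← Category.assoc, ← Category.assoc, hinv1, Category.id_comp]
    apply hall TI inv hrec
    · rw [← hreacht, ← Category.assoc, hinv2, Category.id_comp]
    · rw [← hreach, ← Category.assoc, hinv2, Category.id_comp]
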